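/- For every equality pattern μ on 2k-tuples (given by a partition of [2k]) and every k-tuple v̄ over [n], there exists a permutation π of [k] such that the permuted pattern π⋆μ is 'good' — meaning for every used constant class I_s of π⋆μ, if i is the smallest index with k+i ∈ I_s then also i ∈ I_s — and the set P̃_{μ,v̄} of tuples satisfying conditions (a),(b),(c) relative to (μ, v̄) equals P̃_{π⋆μ, π⋆v̄}. -/
import Mathlib


attribute [local instance] Classical.propDecidable

/-- `x` lies in a constant class (a class whose minimum element is in the first half). -/
def IsConstantElem (k : ℕ) (P : Setoid (Fin (k + k))) (x : Fin (k + k)) : Prop :=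
  ∃ j : Fin k, P.r x (Fin.castAdd k j)

/-- `x` lies in a used constant class (constant and containing an element of the
second half). -/
def IsUsedConstantElem (k : ℕ) (P : Setoid (Fin (k + k))) (x : Fin (k + k)) : Prop :=
  IsConstantElem k P x ∧ ∃ j : Fin k, P.r x (Fin.natAdd k j)

/-- `x` lies in a variable class. -/
def IsVariableElem (k : ℕ) (P : Setoid (Fin (k + k))) (x : Fin (k + k)) : Prop :=
  ¬ IsConstantElem k P x

/-- The representative of the class of `x`: its minimum element. -/
noncomputable def rep (k : ℕ) (P : Setoid (Fin (k + k))) (x : Fin (k + k)) :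
    Fin (k + k) :=
  (Finset.univ.filter (fun y => P.r x y)).min'
    ⟨x, Finset.mem_filter.mpr ⟨Finset.mem_univ x, P.refl x⟩⟩

/-- Condition (a). -/
def CondA (n k : ℕ) (P : Setoid (Fin (k + k))) (v' : Fin k → Fin n) : Prop :=
  ∀ i j : Fin k,
    (IsVariableElem k P (Fin.natAdd k i) ∨ IsUsedConstantElem k P (Fin.natAdd k i)) →
    P.r (Fin.natAdd k i) (Fin.natAdd k j) → v' i = v' j

/-- Condition (b). -/
def CondB (n k : ℕ) (P : Setoid (Fin (k + k))) (v' : Fin k → Fin n) : Prop :=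
  ∀ i j : Fin k,
    (IsVariableElem k P (Fin.natAdd k i) ∨ IsUsedConstantElem k P (Fin.natAdd k i)) →
    (IsVariableElem k P (Fin.natAdd k j) ∨ IsUsedConstantElem k P (Fin.natAdd k j)) →
    ¬ P.r (Fin.natAdd k i) (Fin.natAdd k j) → v' i ≠ v' j

/-- Condition (c). -/
def CondC (n k : ℕ) (P : Setoid (Fin (k + k))) (vb v' : Fin k → Fin n) : Prop :=
  ∀ i : Fin k, IsUsedConstantElem k P (Fin.natAdd k i) →
    ∀ j : Fin k, rep k P (Fin.natAdd k i) = Fin.castAdd k j → v' i = vb j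

/-- Condition (d). -/
def CondD (n k : ℕ) (P : Setoid (Fin (k + k))) (vb v' : Fin k → Fin n) : Prop :=
  ∀ i : Fin k, IsVariableElem k P (Fin.natAdd k i) →
    ∀ x : Fin (k + k), IsConstantElem k P x → ¬ IsUsedConstantElem k P x →
      ∀ j : Fin k, rep k P x = Fin.castAdd k j → v' i ≠ vb j

/-- Tuples satisfying conditions (a), (b), (c) relative to the pattern `P` and `vb`. -/
def Ptil (n k : ℕ) (P : Setoid (Fin (k + k))) (vb : Fin k → Fin n) :
    Set (Fin k → Fin n) :=
  {v' | CondA n k P v' ∧ CondB n k P v' ∧ CondC n k P vb v'}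

/-- Extend a permutation of the first `k` indices to `[2k]`, fixing the second half. -/
def extPerm (k : ℕ) (π : Equiv.Perm (Fin k)) : Equiv.Perm (Fin (k + k)) :=
  finSumFinEquiv.symm.trans ((Equiv.sumCongr π (Equiv.refl (Fin k))).trans finSumFinEquiv)

/-- The permuted pattern `π⋆μ`: its classes are the images under `extPerm π` of the
classes of `P`. -/
def starPattern (k : ℕ) (π : Equiv.Perm (Fin k)) (P : Setoid (Fin (k + k))) :
    Setoid (Fin (k + k)) :=
  Setoid.comap (⇑(extPerm k π).symm) P

/-- A pattern is good if for every used constant class, the smallest index `i`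
with `k + i` in the class also satisfies `i` in the class. -/
def GoodPattern (k : ℕ) (P : Setoid (Fin (k + k))) : Prop :=
  ∀ i : Fin k, IsUsedConstantElem k P (Fin.natAdd k i) →
    (∀ j : Fin k, P.r (Fin.natAdd k i) (Fin.natAdd k j) → i ≤ j) →
    P.r (Fin.natAdd k i) (Fin.castAdd k i)


section AuxLemmas

open Finset

lemma extPerm_natAdd (k : ℕ) (π : Equiv.Perm (Fin k)) (j : Fin k) :
    extPerm k π (Fin.natAdd k j) = Fin.natAdd k j := by
  simp only [extPerm, Equiv.trans_apply, finSumFinEquiv_symm_apply_natAdd,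
    Equiv.sumCongr_apply, Sum.map_inr, Equiv.refl_apply, finSumFinEquiv_apply_right]

lemma extPerm_castAdd (k : ℕ) (π : Equiv.Perm (Fin k)) (j : Fin k) :
    extPerm k π (Fin.castAdd k j) = Fin.castAdd k (π j) := by
  simp only [extPerm, Equiv.trans_apply, finSumFinEquiv_symm_apply_castAdd,
    Equiv.sumCongr_apply, Sum.map_inl, finSumFinEquiv_apply_left]

lemma extPerm_symm_natAdd (k : ℕ) (π : Equiv.Perm (Fin k)) (j : Fin k) :
    (extPerm k π).symm (Fin.natAdd k j) = Fin.natAdd k j := by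
  rw [Equiv.symm_apply_eq, extPerm_natAdd]

lemma extPerm_symm_castAdd (k : ℕ) (π : Equiv.Perm (Fin k)) (j : Fin k) :
    (extPerm k π).symm (Fin.castAdd k j) = Fin.castAdd k (π.symm j) := by
  rw [Equiv.symm_apply_eq, extPerm_castAdd, Equiv.apply_symm_apply]

lemma star_r_natnat (k : ℕ) (π : Equiv.Perm (Fin k)) (P : Setoid (Fin (k + k))) (i j : Fin k) :
    (starPattern k π P).r (Fin.natAdd k i) (Fin.natAdd k j) ↔
      P.r (Fin.natAdd k i) (Fin.natAdd k j) := by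
  show P.r ((extPerm k π).symm (Fin.natAdd k i)) ((extPerm k π).symm (Fin.natAdd k j)) ↔ _
  rw [extPerm_symm_natAdd, extPerm_symm_natAdd]

lemma star_r_natcast (k : ℕ) (π : Equiv.Perm (Fin k)) (P : Setoid (Fin (k + k))) (i j : Fin k) :
    (starPattern k π P).r (Fin.natAdd k i) (Fin.castAdd k j) ↔
      P.r (Fin.natAdd k i) (Fin.castAdd k (π.symm j)) := by
  show P.r ((extPerm k π).symm (Fin.natAdd k i)) ((extPerm k π).symm (Fin.castAdd k j)) ↔ _
  rw [extPerm_symm_natAdd, extPerm_symm_castAdd]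

lemma star_const (k : ℕ) (π : Equiv.Perm (Fin k)) (P : Setoid (Fin (k + k))) (i : Fin k) :
    IsConstantElem k (starPattern k π P) (Fin.natAdd k i) ↔
      IsConstantElem k P (Fin.natAdd k i) := by
  constructor
  · rintro ⟨j, hj⟩
    exact ⟨π.symm j, (star_r_natcast k π P i j).mp hj⟩
  · rintro ⟨j, hj⟩
    refine ⟨π j, (star_r_natcast k π P i (π j)).mpr ?_⟩
    rwa [Equiv.symm_apply_apply]

lemma star_used (k : ℕ) (π : Equiv.Perm (Fin k)) (P : Setoid (Fin (k + k))) (i : Fin k) :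
    IsUsedConstantElem k (starPattern k π P) (Fin.natAdd k i) ↔
      IsUsedConstantElem k P (Fin.natAdd k i) := by
  unfold IsUsedConstantElem
  rw [star_const]
  constructor
  · rintro ⟨h1, j, hj⟩
    exact ⟨h1, j, (star_r_natnat k π P i j).mp hj⟩
  · rintro ⟨h1, j, hj⟩
    exact ⟨h1, j, (star_r_natnat k π P i j).mpr hj⟩

/-- first-half indices of the class of `k+i`. -/
noncomputable def SetS (k : ℕ) (P : Setoid (Fin (k + k))) (i : Fin k) : Finset (Fin k) :=
  Finset.univ.filter (fun s : Fin k => P.r (Fin.natAdd k i) (Fin.castAdd k s))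

lemma mem_SetS (k : ℕ) (P : Setoid (Fin (k + k))) (i s : Fin k) :
    s ∈ SetS k P i ↔ P.r (Fin.natAdd k i) (Fin.castAdd k s) := by
  simp [SetS]

lemma SetS_star (k : ℕ) (π : Equiv.Perm (Fin k)) (P : Setoid (Fin (k + k))) (i : Fin k) :
    SetS k (starPattern k π P) i = (SetS k P i).image (⇑π) := by
  ext s
  rw [mem_SetS, star_r_natcast, Finset.mem_image]
  constructor
  · intro h
    exact ⟨π.symm s, (mem_SetS k P i _).mpr h, Equiv.apply_symm_apply π s⟩
  · rintro ⟨x, hx, rfl⟩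
    rw [Equiv.symm_apply_apply]
    exact (mem_SetS k P i x).mp hx

lemma rep_eq_min (k : ℕ) (P : Setoid (Fin (k + k))) (i : Fin k)
    (hne : (SetS k P i).Nonempty) :
    rep k P (Fin.natAdd k i) = Fin.castAdd k ((SetS k P i).min' hne) := by
  set m := (SetS k P i).min' hne with hm
  have hmmem : m ∈ SetS k P i := Finset.min'_mem _ _
  have hr : P.r (Fin.natAdd k i) (Fin.castAdd k m) := (mem_SetS k P i m).mp hmmem
  apply le_antisymm
  · apply Finset.min'_le
    exact Finset.mem_filter.mpr ⟨Finset.mem_univ _, hr⟩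
  · apply Finset.le_min'
    intro y hy
    have hry : P.r (Fin.natAdd k i) y := (Finset.mem_filter.mp hy).2
    by_cases hlt : (y : ℕ) < k
    · set j : Fin k := ⟨(y : ℕ), hlt⟩ with hj
      have hyj : y = Fin.castAdd k j := by
        apply Fin.ext
        simp [hj]
      have hjm : j ∈ SetS k P i := (mem_SetS k P i j).mpr (hyj ▸ hry)
      have hle : m ≤ j := Finset.min'_le _ _ hjm
      rw [hyj, Fin.le_def] at *
      simpa using hle
    · rw [Fin.le_def]
      have : (m : ℕ) < k := m.isLt
      simp only [Fin.coe_castAdd]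
      omega

noncomputable def leader (k : ℕ) (P : Setoid (Fin (k + k))) (i : Fin k) : Fin k :=
  (Finset.univ.filter (fun j => P.r (Fin.natAdd k i) (Fin.natAdd k j))).min'
    ⟨i, Finset.mem_filter.mpr ⟨Finset.mem_univ i, P.refl _⟩⟩

lemma leader_rel (k : ℕ) (P : Setoid (Fin (k + k))) (i : Fin k) :
    P.r (Fin.natAdd k i) (Fin.natAdd k (leader k P i)) := by
  have := Finset.min'_mem (Finset.univ.filter (fun j => P.r (Fin.natAdd k i) (Fin.natAdd k j)))
    ⟨i, Finset.mem_filter.mpr ⟨Finset.mem_univ i, P.refl _⟩⟩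
  exact (Finset.mem_filter.mp this).2

lemma leader_min (k : ℕ) (P : Setoid (Fin (k + k))) (i j : Fin k)
    (h : P.r (Fin.natAdd k i) (Fin.natAdd k j)) : leader k P i ≤ j := by
  apply Finset.min'_le
  exact Finset.mem_filter.mpr ⟨Finset.mem_univ j, h⟩

lemma castAdd_inj (k : ℕ) {a b : Fin k} (h : Fin.castAdd k a = Fin.castAdd k b) : a = b := by
  apply Fin.ext
  have := congrArg Fin.val h
  simpa using this

lemma existsB {α : Type*} [DecidableEq α] (f : α → ℕ) (T : Finset α) :
    ∀ G : Finset α, T ⊆ G → (∀ i ∈ T, 1 ≤ f i) → (∑ i ∈ T, f i) ≤ G.card →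
    ∃ B : α → Finset α, (∀ i ∈ T, B i ⊆ G ∧ i ∈ B i ∧ (B i).card = f i) ∧
      (∀ i ∈ T, ∀ j ∈ T, i ≠ j → Disjoint (B i) (B j)) := by
  induction T using Finset.induction_on with
  | empty =>
    intro G _ _ _
    exact ⟨fun _ => ∅, fun i hi => absurd hi (notMem_empty i), fun i hi => absurd hi (notMem_empty i)⟩
  | @insert i s hi ih =>
    intro G hTG hf hsum
    have hiG : i ∈ G := hTG (mem_insert_self i s)
    rw [Finset.sum_insert hi] at hsum
    have hfi : 1 ≤ f i := hf i (mem_insert_self i s)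
    have hcard_s : s.card ≤ ∑ j ∈ s, f j := by
      calc s.card = ∑ _j ∈ s, 1 := by simp
        _ ≤ ∑ j ∈ s, f j := Finset.sum_le_sum (fun j hj => hf j (mem_insert_of_mem hj))
    have hsub : insert i s ⊆ G := hTG
    have hcardG : (G \ insert i s).card = G.card - (insert i s).card := card_sdiff_of_subset hsub
    have hins : (insert i s).card = s.card + 1 := card_insert_of_notMem hi
    have hle : f i - 1 ≤ (G \ insert i s).card := by
      have := card_le_card hsub
      omega
    obtain ⟨E, hE, hEcard⟩ := Finset.exists_subset_card_eq hle
    have hiE : i ∉ E := fun h => (mem_sdiff.mp (hE h)).2 (mem_insert_self i s)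
    set Bi := insert i E with hBi
    have hBiG : Bi ⊆ G := by
      intro x hx
      rcases mem_insert.mp hx with rfl | hx
      · exact hiG
      · exact (mem_sdiff.mp (hE hx)).1
    have hBicard : Bi.card = f i := by
      rw [hBi, card_insert_of_notMem hiE, hEcard]; omega
    have hBis : ∀ j ∈ s, j ∉ Bi := by
      intro j hj hmem
      rcases mem_insert.mp hmem with rfl | hmem
      · exact hi hj
      · exact (mem_sdiff.mp (hE hmem)).2 (mem_insert_of_mem hj)
    have hG' : s ⊆ G \ Bi := fun j hj =>
      mem_sdiff.mpr ⟨hTG (mem_insert_of_mem hj), hBis j hj⟩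
    have hsum' : (∑ j ∈ s, f j) ≤ (G \ Bi).card := by
      rw [card_sdiff_of_subset hBiG, hBicard]
      omega
    obtain ⟨B', hB'1, hB'2⟩ := ih (G \ Bi) hG' (fun j hj => hf j (mem_insert_of_mem hj)) hsum'
    refine ⟨fun j => if j = i then Bi else B' j, ?_, ?_⟩
    · intro j hj
      rcases mem_insert.mp hj with rfl | hj
      · simp only [if_pos rfl]
        exact ⟨hBiG, mem_insert_self _ _, hBicard⟩
      · have hji : j ≠ i := fun h => hi (h ▸ hj)
        simp only [if_neg hji]
        obtain ⟨h1, h2, h3⟩ := hB'1 j hj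
        exact ⟨h1.trans (sdiff_subset), h2, h3⟩
    · intro a ha b hb hab
      have key : ∀ c ∈ s, Disjoint Bi (B' c) := fun c hc =>
        disjoint_sdiff_self_right.mono_right (hB'1 c hc).1
      have mem' : ∀ c, c ∈ insert i s → c ≠ i → c ∈ s := by
        intro c hc hci
        rcases mem_insert.mp hc with h | h
        · exact absurd h hci
        · exact h
      by_cases hai : a = i <;> by_cases hbi : b = i
      · exact absurd (hai.trans hbi.symm) hab
      · simp only [if_pos hai, if_neg hbi]
        exact key b (mem' b hb hbi)
      · simp only [if_neg hai, if_pos hbi]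
        exact (key a (mem' a ha hai)).symm
      · simp only [if_neg hai, if_neg hbi]
        exact hB'2 a (mem' a ha hai) b (mem' b hb hbi) hab

lemma existsInj (k : ℕ) (S B : Fin k → Finset (Fin k)) (T : Finset (Fin k))
    (hSd : ∀ i ∈ T, ∀ j ∈ T, i ≠ j → Disjoint (S i) (S j))
    (hBd : ∀ i ∈ T, ∀ j ∈ T, i ≠ j → Disjoint (B i) (B j))
    (hcard : ∀ i ∈ T, (B i).card = (S i).card)
    (hSne : ∀ i ∈ T, (S i).Nonempty) :
    ∃ f : Fin k → Fin k,
      (∀ i ∈ T, (S i).image f = B i) ∧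
      (∀ i ∈ T, ∀ x ∈ S i, (∀ y ∈ S i, x ≤ y) → ∀ b ∈ B i, f x ≤ b) ∧
      (∀ x ∈ T.biUnion S, ∀ y ∈ T.biUnion S, f x = f y → x = y) := by
  induction T using Finset.induction_on with
  | empty =>
    refine ⟨id, ?_, ?_, ?_⟩ <;> intro i hi <;> exact absurd hi (notMem_empty i)
  | @insert i s hi ih =>
    obtain ⟨f', hf'1, hf'2, hf'3⟩ := ih
      (fun a ha b hb => hSd a (mem_insert_of_mem ha) b (mem_insert_of_mem hb))
      (fun a ha b hb => hBd a (mem_insert_of_mem ha) b (mem_insert_of_mem hb))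
      (fun a ha => hcard a (mem_insert_of_mem ha))
      (fun a ha => hSne a (mem_insert_of_mem ha))
    have hiT : i ∈ insert i s := mem_insert_self i s
    have hSne_i : (S i).Nonempty := hSne i hiT
    have hBne_i : (B i).Nonempty := by
      rw [← Finset.card_pos, hcard i hiT, Finset.card_pos]; exact hSne_i
    set mS := (S i).min' hSne_i with hmS
    set mB := (B i).min' hBne_i with hmB
    have hmSmem : mS ∈ S i := Finset.min'_mem _ _
    have hmBmem : mB ∈ B i := Finset.min'_mem _ _
    have hc : ((S i).erase mS).card = ((B i).erase mB).card := by
      rw [card_erase_of_mem hmSmem, card_erase_of_mem hmBmem, hcard i hiT]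
    set E := Finset.equivOfCardEq hc with hEdef
    set g : Fin k → Fin k := fun x =>
      if hx : x ∈ (S i).erase mS then (E ⟨x, hx⟩ : Fin k) else mB with hgdef
    have hg_mem : ∀ x ∈ S i, g x ∈ B i := by
      intro x hx
      by_cases hxe : x ∈ (S i).erase mS
      · simp only [hgdef, dif_pos hxe]
        exact Finset.erase_subset _ _ (E ⟨x, hxe⟩).2
      · simp only [hgdef, dif_neg hxe]
        exact hmBmem
    have hg_eq_min : ∀ x ∈ S i, x ∉ (S i).erase mS → g x = mB := by
      intro x _ hxe
      simp only [hgdef, dif_neg hxe]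
    have hnotmin : ∀ x, (hxe : x ∈ (S i).erase mS) → g x ≠ mB := by
      intro x hxe
      simp only [hgdef, dif_pos hxe]
      exact (Finset.mem_erase.mp (E ⟨x, hxe⟩).2).1
    have hg_inj : ∀ x ∈ S i, ∀ y ∈ S i, g x = g y → x = y := by
      intro x hx y hy hxy
      by_cases hxe : x ∈ (S i).erase mS <;> by_cases hye : y ∈ (S i).erase mS
      · simp only [hgdef, dif_pos hxe, dif_pos hye] at hxy
        have := E.injective (Subtype.ext hxy)
        exact congrArg Subtype.val this
      · rw [hg_eq_min y hy hye] at hxy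
        exact absurd hxy (hnotmin x hxe)
      · rw [hg_eq_min x hx hxe] at hxy
        exact absurd hxy.symm (hnotmin y hye)
      · have hxm : x = mS := by
          by_contra h
          exact hxe (Finset.mem_erase.mpr ⟨h, hx⟩)
        have hym : y = mS := by
          by_contra h
          exact hye (Finset.mem_erase.mpr ⟨h, hy⟩)
        rw [hxm, hym]
    have hg_image : (S i).image g = B i := by
      apply Finset.eq_of_subset_of_card_le
      · intro b hb
        obtain ⟨x, hx, rfl⟩ := Finset.mem_image.mp hb
        exact hg_mem x hx
      · rw [Finset.card_image_of_injOn (fun x hx y hy => hg_inj x hx y hy), hcard i hiT]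
    set f : Fin k → Fin k := fun x => if x ∈ S i then g x else f' x with hfdef
    have hf_on_Si : ∀ x ∈ S i, f x = g x := fun x hx => by
      simp only [hfdef, if_pos hx]
    have hf_off : ∀ j ∈ s, ∀ x ∈ S j, f x = f' x := by
      intro j hj x hx
      have hxnot : x ∉ S i := by
        intro hxi
        have hdisj := hSd i hiT j (mem_insert_of_mem hj) (fun h => hi (h ▸ hj))
        exact (Finset.disjoint_left.mp hdisj) hxi hx
      simp only [hfdef, if_neg hxnot]
    have himage : ∀ j ∈ insert i s, (S j).image f = B j := by
      intro j hj
      rcases Finset.mem_insert.mp hj with rfl | hj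
      · rw [← hg_image]
        apply Finset.image_congr
        intro x hx
        exact hf_on_Si x hx
      · rw [← hf'1 j hj]
        apply Finset.image_congr
        intro x hx
        exact (hf_off j hj x hx)
    refine ⟨f, himage, ?_, ?_⟩
    · intro j hj x hx hxmin b hb
      rcases Finset.mem_insert.mp hj with rfl | hj
      · have hxm : x = mS := le_antisymm (hxmin mS hmSmem) (Finset.min'_le _ _ hx)
        have hfx : f x = mB := by
          rw [hf_on_Si x hx]
          apply hg_eq_min x hx
          rw [hxm]
          simp [Finset.mem_erase]
        rw [hfx]
        exact Finset.min'_le _ _ hb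
      · rw [hf_off j hj x hx]
        exact hf'2 j hj x hx hxmin b hb
    · intro x hx y hy hxy
      obtain ⟨jx, hjx, hxS⟩ := Finset.mem_biUnion.mp hx
      obtain ⟨jy, hjy, hyS⟩ := Finset.mem_biUnion.mp hy
      rcases Finset.mem_insert.mp hjx with rfl | hjx' <;>
        rcases Finset.mem_insert.mp hjy with rfl | hjy'
      · exact hg_inj x hxS y hyS (by rwa [hf_on_Si x hxS, hf_on_Si y hyS] at hxy)
      · exfalso
        have h1 : f x ∈ B jx := by
          rw [hf_on_Si x hxS]; exact hg_mem x hxS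
        have h2 : f y ∈ B jy := by
          rw [hf_off jy hjy' y hyS, ← hf'1 jy hjy']
          exact Finset.mem_image_of_mem f' hyS
        have hne : jx ≠ jy := fun h => hi (h ▸ hjy')
        have hdisj := hBd jx hiT jy (mem_insert_of_mem hjy') hne
        exact (Finset.disjoint_left.mp hdisj) h1 (hxy ▸ h2)
      · exfalso
        have h1 : f y ∈ B jy := by
          rw [hf_on_Si y hyS]; exact hg_mem y hyS
        have h2 : f x ∈ B jx := by
          rw [hf_off jx hjx' x hxS, ← hf'1 jx hjx']
          exact Finset.mem_image_of_mem f' hxS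
        have hne : jy ≠ jx := fun h => hi (h ▸ hjx')
        have hdisj := hBd jy hiT jx (mem_insert_of_mem hjx') hne
        exact (Finset.disjoint_left.mp hdisj) h1 (hxy ▸ h2)
      · rw [hf_off jx hjx' x hxS, hf_off jy hjy' y hyS] at hxy
        exact hf'3 x (Finset.mem_biUnion.mpr ⟨jx, hjx', hxS⟩)
          y (Finset.mem_biUnion.mpr ⟨jy, hjy', hyS⟩) hxy

lemma existsPerm (k : ℕ) (S B : Fin k → Finset (Fin k)) (T : Finset (Fin k))
    (hSd : ∀ i ∈ T, ∀ j ∈ T, i ≠ j → Disjoint (S i) (S j))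
    (hBd : ∀ i ∈ T, ∀ j ∈ T, i ≠ j → Disjoint (B i) (B j))
    (hcard : ∀ i ∈ T, (B i).card = (S i).card)
    (hSne : ∀ i ∈ T, (S i).Nonempty) :
    ∃ π : Equiv.Perm (Fin k),
      (∀ i ∈ T, (S i).image (⇑π) = B i) ∧
      (∀ i ∈ T, ∀ x ∈ S i, (∀ y ∈ S i, x ≤ y) → ∀ b ∈ B i, π x ≤ b) := by
  obtain ⟨f, hf1, hf2, hf3⟩ := existsInj k S B T hSd hBd hcard hSne
  set U := T.biUnion S with hU
  set V := T.biUnion B with hV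
  have hSU : ∀ i ∈ T, S i ⊆ U := fun i hi => Finset.subset_biUnion_of_mem S hi
  have himU : U.image f = V := by
    rw [hU, Finset.biUnion_image]
    exact Finset.biUnion_congr rfl hf1
  have hinjOn : Set.InjOn f U := fun x hx y hy h => hf3 x hx y hy h
  have hUV : U.card = V.card := by
    rw [← himU, Finset.card_image_of_injOn hinjOn]
  have hccard : ((univ : Finset (Fin k)) \ U).card = ((univ : Finset (Fin k)) \ V).card := by
    rw [Finset.card_sdiff_of_subset (subset_univ U), Finset.card_sdiff_of_subset (subset_univ V), hUV]
  set c := Finset.equivOfCardEq hccard with hc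
  set F : Fin k → Fin k := fun x =>
    if hx : x ∈ U then f x else (c ⟨x, Finset.mem_sdiff.mpr ⟨mem_univ x, hx⟩⟩ : Fin k)
    with hFdef
  have hF_on : ∀ x ∈ U, F x = f x := fun x hx => by simp only [hFdef, dif_pos hx]
  have hF_in : ∀ x ∈ U, F x ∈ V := by
    intro x hx
    rw [hF_on x hx, ← himU]
    exact Finset.mem_image_of_mem f hx
  have hF_out : ∀ x, (hx : x ∉ U) → F x ∉ V := by
    intro x hx
    simp only [hFdef, dif_neg hx]
    have := (c ⟨x, Finset.mem_sdiff.mpr ⟨mem_univ x, hx⟩⟩).2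
    exact (Finset.mem_sdiff.mp this).2
  have hF_inj : Function.Injective F := by
    intro x y h
    by_cases hx : x ∈ U <;> by_cases hy : y ∈ U
    · exact hinjOn hx hy (by rwa [hF_on x hx, hF_on y hy] at h)
    · exact absurd (h ▸ hF_in x hx) (hF_out y hy)
    · exact absurd (h.symm ▸ hF_in y hy) (hF_out x hx)
    · have : c ⟨x, Finset.mem_sdiff.mpr ⟨mem_univ x, hx⟩⟩
          = c ⟨y, Finset.mem_sdiff.mpr ⟨mem_univ y, hy⟩⟩ := by
        apply Subtype.ext
        simpa only [hFdef, dif_neg hx, dif_neg hy] using h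
      exact congrArg Subtype.val (c.injective this)
  refine ⟨Equiv.ofBijective F (Finite.injective_iff_bijective.mp hF_inj), ?_, ?_⟩
  · intro i hi
    rw [← hf1 i hi]
    apply Finset.image_congr
    intro x hx
    exact hF_on x (hSU i hi hx)
  · intro i hi x hx hxmin b hb
    have hFx : Equiv.ofBijective F (Finite.injective_iff_bijective.mp hF_inj) x = f x := by
      simp only [Equiv.ofBijective_apply]
      exact hF_on x (hSU i hi hx)
    rw [hFx]
    exact hf2 i hi x hx hxmin b hb

end AuxLemmas

theorem exists_good_permuted_pattern (n k : ℕ) (P : Setoid (Fin (k + k)))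
    (vb : Fin k → Fin n) :
    ∃ π : Equiv.Perm (Fin k),
      GoodPattern k (starPattern k π P) ∧
      Ptil n k P vb = Ptil n k (starPattern k π P) (fun i => vb (π.symm i)) := by
  classical
  set T : Finset (Fin k) := Finset.univ.filter
    (fun i => IsUsedConstantElem k P (Fin.natAdd k i) ∧
      ∀ j : Fin k, P.r (Fin.natAdd k i) (Fin.natAdd k j) → i ≤ j) with hT
  have hSne : ∀ i ∈ T, (SetS k P i).Nonempty := by
    intro i hi
    obtain ⟨_, ⟨⟨j, hj⟩, _⟩, _⟩ := Finset.mem_filter.mp hi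
    exact ⟨j, (mem_SetS k P i j).mpr hj⟩
  have hSd : ∀ i ∈ T, ∀ j ∈ T, i ≠ j → Disjoint (SetS k P i) (SetS k P j) := by
    intro i hi j hj hij
    rw [Finset.disjoint_left]
    intro s hsi hsj
    have h1 := (mem_SetS k P i s).mp hsi
    have h2 := (mem_SetS k P j s).mp hsj
    have hr : P.r (Fin.natAdd k i) (Fin.natAdd k j) := P.trans h1 (P.symm h2)
    have hminI := (Finset.mem_filter.mp hi).2.2
    have hminJ := (Finset.mem_filter.mp hj).2.2
    exact hij (le_antisymm (hminI j hr) (hminJ i (P.symm hr)))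
  have hsum : (∑ i ∈ T, (SetS k P i).card) ≤ (Finset.univ : Finset (Fin k)).card := by
    rw [← Finset.card_biUnion hSd]
    exact Finset.card_le_card (Finset.subset_univ _)
  obtain ⟨B, hB1, hB2⟩ := existsB (fun i => (SetS k P i).card) T Finset.univ
    (Finset.subset_univ T) (fun i hi => (hSne i hi).card_pos) hsum
  have hcard : ∀ i ∈ T, (B i).card = (SetS k P i).card := fun i hi => (hB1 i hi).2.2
  obtain ⟨π, himg, hmin⟩ := existsPerm k (SetS k P) B T hSd hB2 hcard hSne
  -- leader facts
  have hleadT : ∀ i : Fin k, IsUsedConstantElem k P (Fin.natAdd k i) →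
      leader k P i ∈ T ∧ SetS k P (leader k P i) = SetS k P i := by
    intro i hu
    have hrel := leader_rel k P i
    obtain ⟨⟨j0, hj0⟩, _⟩ := hu
    constructor
    · refine Finset.mem_filter.mpr ⟨Finset.mem_univ _, ⟨⟨j0, ?_⟩, ⟨i, P.symm hrel⟩⟩, ?_⟩
      · exact P.trans (P.symm hrel) hj0
      · intro j h
        exact leader_min k P i j (P.trans hrel h)
    · ext s
      rw [mem_SetS, mem_SetS]
      constructor
      · intro h
        exact P.trans hrel h
      · intro h
        exact P.trans (P.symm hrel) h
  -- key representative fact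
  have key : ∀ i : Fin k, IsUsedConstantElem k P (Fin.natAdd k i) →
      ∃ m : Fin k, rep k P (Fin.natAdd k i) = Fin.castAdd k m ∧
        rep k (starPattern k π P) (Fin.natAdd k i) = Fin.castAdd k (π m) := by
    intro i hu
    obtain ⟨hlT, hSeq⟩ := hleadT i hu
    obtain ⟨⟨j0, hj0⟩, _⟩ := hu
    have hne : (SetS k P i).Nonempty := ⟨j0, (mem_SetS k P i j0).mpr hj0⟩
    set m := (SetS k P i).min' hne with hm
    have hmmem : m ∈ SetS k P i := Finset.min'_mem _ _
    have hneQ : (SetS k (starPattern k π P) i).Nonempty := by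
      rw [SetS_star]; exact hne.image _
    refine ⟨m, rep_eq_min k P i hne, ?_⟩
    rw [rep_eq_min k (starPattern k π P) i hneQ]
    congr 1
    apply le_antisymm
    · apply Finset.min'_le
      rw [SetS_star]
      exact Finset.mem_image_of_mem _ hmmem
    · have hmem' : m ∈ SetS k P (leader k P i) := hSeq ▸ hmmem
      have hlb : ∀ y ∈ SetS k P (leader k P i), m ≤ y := by
        intro y hy
        rw [hSeq] at hy
        exact Finset.min'_le _ _ hy
      have hminQmem : (SetS k (starPattern k π P) i).min' hneQ ∈ B (leader k P i) := by
        rw [← himg (leader k P i) hlT, hSeq, ← SetS_star]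
        exact Finset.min'_mem _ _
      exact hmin (leader k P i) hlT m hmem' hlb _ hminQmem
  have statusIff : ∀ i : Fin k,
      ((IsVariableElem k (starPattern k π P) (Fin.natAdd k i) ∨
        IsUsedConstantElem k (starPattern k π P) (Fin.natAdd k i)) ↔
       (IsVariableElem k P (Fin.natAdd k i) ∨ IsUsedConstantElem k P (Fin.natAdd k i))) := by
    intro i
    unfold IsVariableElem
    rw [star_const, star_used]
  refine ⟨π, ?_, ?_⟩
  · -- GoodPattern
    intro i huQ hminQ
    have huP := (star_used k π P i).mp huQ
    have hminP : ∀ j : Fin k, P.r (Fin.natAdd k i) (Fin.natAdd k j) → i ≤ j :=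
      fun j h => hminQ j ((star_r_natnat k π P i j).mpr h)
    have hiT : i ∈ T := Finset.mem_filter.mpr ⟨Finset.mem_univ _, huP, hminP⟩
    have hiB : i ∈ B i := (hB1 i hiT).2.1
    rw [← himg i hiT] at hiB
    obtain ⟨x, hx, hxe⟩ := Finset.mem_image.mp hiB
    have hxi : π.symm i = x := by
      rw [← hxe, Equiv.symm_apply_apply]
    apply (star_r_natcast k π P i i).mpr
    rw [hxi]
    exact (mem_SetS k P i x).mp hx
  · -- Ptil equality
    ext v'
    simp only [Ptil, Set.mem_setOf_eq]
    constructor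
    · rintro ⟨hA, hB, hC⟩
      refine ⟨?_, ?_, ?_⟩
      · intro i j hst hr
        exact hA i j ((statusIff i).mp hst) ((star_r_natnat k π P i j).mp hr)
      · intro i j hsti hstj hr
        exact hB i j ((statusIff i).mp hsti) ((statusIff j).mp hstj)
          (fun h => hr ((star_r_natnat k π P i j).mpr h))
      · intro i huQ j hrep
        have huP := (star_used k π P i).mp huQ
        obtain ⟨m, hrepP, hrepQ⟩ := key i huP
        have hj : j = π m := castAdd_inj k (hrep.symm.trans hrepQ)
        have hv := hC i huP m hrepP
        show v' i = vb (π.symm j)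
        rw [hj, Equiv.symm_apply_apply]
        exact hv
    · rintro ⟨hA, hB, hC⟩
      refine ⟨?_, ?_, ?_⟩
      · intro i j hst hr
        exact hA i j ((statusIff i).mpr hst) ((star_r_natnat k π P i j).mpr hr)
      · intro i j hsti hstj hr
        exact hB i j ((statusIff i).mpr hsti) ((statusIff j).mpr hstj)
          (fun h => hr ((star_r_natnat k π P i j).mp h))
      · intro i huP j hrep
        obtain ⟨m, hrepP, hrepQ⟩ := key i huP
        have hj : j = m := castAdd_inj k (hrep.symm.trans hrepP)
        have hv := hC i ((star_used k π P i).mpr huP) (π m) hrepQ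
        rw [hj]
        simpa [Equiv.symm_apply_apply] using hv
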